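/- Let f ∈ ℝ^{m×γ} and g ∈ ℝ^{n×(ε×m)} be stochastic matrices (interpreting g as a family of stochastic maps g(−, j) : ε → n for j ∈ m). Define the composite (g ∘ f)(i, k) = Σ_{j∈m} g(k, j)·f(j, i) for (i,k) ∈ γ×ε, and define R(f) = image of the columns of f as a convex subset of D(m), R(g)(j) = convex hull of columns { g(−, j)(k) : k ∈ ε }. Then the image of g ∘ f (as a convex subset of D(n)) is contained in the set ⋃ over extreme points x of R(f) of the convex-combination Σ_j x_j · R(g)(j), convexly closed. I.e., image(g ∘ f) ⊆ R(g)*(image(f)). -/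

import Mathlib

/-- Minkowski for polytopes: convex hull of a finite set is the convex hull of its
extreme points. -/
lemma polytope_eq_convexHull_extremePoints {d : ℕ} (V : Set (Fin d → ℝ)) (hV : V.Finite) :
    convexHull ℝ V = convexHull ℝ ((convexHull ℝ V).extremePoints ℝ) := by
  have hcomp : IsCompact (convexHull ℝ V) := hV.isCompact_convexHull ℝ
  have hext : ((convexHull ℝ V).extremePoints ℝ).Finite :=
    hV.subset extremePoints_convexHull_subset
  have := closure_convexHull_extremePoints hcomp (convex_convexHull ℝ V)
  rw [(hext.isClosed_convexHull ℝ).closure_eq] at this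
  exact this.symm

/-- Op-lax functoriality: the image (convex hull of columns) of the composite
`g ∘ f` in `ImP` is contained in the Kleisli-`CP` composite `R(g)* (image f)`. -/
theorem oplax_composition {γ ε m n : ℕ}
    (f : Fin m → Fin γ → ℝ) (g : Fin n → Fin ε → Fin m → ℝ)
    (hf1 : ∀ j i, 0 ≤ f j i) (hf2 : ∀ i, ∑ j, f j i = 1)
    (hg1 : ∀ a k j, 0 ≤ g a k j) (hg2 : ∀ k j, ∑ a, g a k j = 1) :
    convexHull ℝ
        (Set.range (fun ik : Fin γ × Fin ε => fun a => ∑ j, g a ik.2 j * f j ik.1))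
      ⊆ convexHull ℝ
          {y | ∃ x ∈ Set.extremePoints ℝ
                  (convexHull ℝ (Set.range (fun i : Fin γ => fun j => f j i))),
               ∃ p : Fin m → Fin n → ℝ,
                 (∀ j, p j ∈ convexHull ℝ
                     (Set.range (fun k : Fin ε => fun a => g a k j))) ∧
                 y = ∑ j, x j • p j} := by
  set S : Set (Fin n → ℝ) :=
    {y | ∃ x ∈ Set.extremePoints ℝ
            (convexHull ℝ (Set.range (fun i : Fin γ => fun j => f j i))),
         ∃ p : Fin m → Fin n → ℝ,
           (∀ j, p j ∈ convexHull ℝ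
               (Set.range (fun k : Fin ε => fun a => g a k j))) ∧
           y = ∑ j, x j • p j} with hS
  apply convexHull_min _ (convex_convexHull ℝ S)
  rintro _ ⟨⟨i, k⟩, rfl⟩
  -- the columns of g at k
  set q : Fin m → Fin n → ℝ := fun j a => g a k j with hq
  -- linear map x ↦ ∑ j, x j • q j
  set L : (Fin m → ℝ) →ₗ[ℝ] (Fin n → ℝ) :=
    { toFun := fun x => ∑ j, x j • q j
      map_add' := by
        intro x y
        simp [add_smul, Finset.sum_add_distrib]
      map_smul' := by
        intro c x
        simp [Finset.smul_sum, smul_smul] } with hL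
  have hcol : (fun j => f j i) ∈
      convexHull ℝ (Set.range (fun i : Fin γ => fun j => f j i)) :=
    subset_convexHull ℝ _ ⟨i, rfl⟩
  have hMink := polytope_eq_convexHull_extremePoints
    (Set.range (fun i : Fin γ => fun j => f j i)) (Set.finite_range _)
  rw [hMink] at hcol
  have himg : L (fun j => f j i) ∈
      convexHull ℝ (L '' ((convexHull ℝ (Set.range (fun i : Fin γ => fun j => f j i))).extremePoints ℝ)) := by
    rw [← L.image_convexHull]
    exact ⟨_, hcol, rfl⟩
  have hsub : L '' ((convexHull ℝ (Set.range (fun i : Fin γ => fun j => f j i))).extremePoints ℝ) ⊆ S := by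
    rintro _ ⟨x, hx, rfl⟩
    exact ⟨x, hx, q, fun j => subset_convexHull ℝ _ ⟨k, rfl⟩, rfl⟩
  have key : L (fun j => f j i) ∈ convexHull ℝ S :=
    convexHull_mono hsub himg
  have : (fun a => ∑ j, g a k j * f j i) = L (fun j => f j i) := by
    funext a
    simp [hL, hq, mul_comm]
  show (fun a => ∑ j, g a k j * f j i) ∈ convexHull ℝ S
  rw [this]
  exact key
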